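/- Let G̃ be the group with presentation on generators Γ₁, Γ₂, Γ₃, Γ₄, Γ₅ and relations: ΓᵢΓⱼΓᵢ = ΓⱼΓᵢΓⱼ for (i,j) ∈ {(1,2),(1,3),(2,3),(2,4),(2,5),(4,5)}; ΓᵢΓⱼ = ΓⱼΓᵢ for (i,j) ∈ {(1,4),(1,5),(3,4),(3,5)}; Γ₁ commutes with both Γ₃Γ₂Γ₃⁻¹ and Γ₃⁻¹Γ₂Γ₃; Γ₄ commutes with both Γ₅Γ₂Γ₅⁻¹ and Γ₅⁻¹Γ₂Γ₅. Then in G̃ the identity Γ₄⁻¹Γ₂Γ₅⁻²Γ₄Γ₅²Γ₂⁻¹Γ₄ = Γ₂ holds. -/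

import Mathlib

open scoped commutatorElement

/-- The defining relations of the group `G̃` on generators `Γ₁, …, Γ₅` (indexed by
`Fin 5`, where index `i` corresponds to `Γᵢ₊₁`): braid relations `ΓᵢΓⱼΓᵢ = ΓⱼΓᵢΓⱼ` for
`(i,j) ∈ {(1,2),(1,3),(2,3),(2,4),(2,5),(4,5)}`, commutation `ΓᵢΓⱼ = ΓⱼΓᵢ` for
`(i,j) ∈ {(1,4),(1,5),(3,4),(3,5)}`, `Γ₁` commutes with `Γ₃Γ₂Γ₃⁻¹` and `Γ₃⁻¹Γ₂Γ₃`,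
and `Γ₄` commutes with `Γ₅Γ₂Γ₅⁻¹` and `Γ₅⁻¹Γ₂Γ₅`. -/
def tildeRels : Set (FreeGroup (Fin 5)) :=
  let Γ : Fin 5 → FreeGroup (Fin 5) := FreeGroup.of
  { Γ 0 * Γ 1 * Γ 0 * (Γ 1 * Γ 0 * Γ 1)⁻¹,
    Γ 0 * Γ 2 * Γ 0 * (Γ 2 * Γ 0 * Γ 2)⁻¹,
    Γ 1 * Γ 2 * Γ 1 * (Γ 2 * Γ 1 * Γ 2)⁻¹,
    Γ 1 * Γ 3 * Γ 1 * (Γ 3 * Γ 1 * Γ 3)⁻¹,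
    Γ 1 * Γ 4 * Γ 1 * (Γ 4 * Γ 1 * Γ 4)⁻¹,
    Γ 3 * Γ 4 * Γ 3 * (Γ 4 * Γ 3 * Γ 4)⁻¹,
    ⁅Γ 0, Γ 3⁆, ⁅Γ 0, Γ 4⁆, ⁅Γ 2, Γ 3⁆, ⁅Γ 2, Γ 4⁆,
    ⁅Γ 0, Γ 2 * Γ 1 * (Γ 2)⁻¹⁆, ⁅Γ 0, (Γ 2)⁻¹ * Γ 1 * Γ 2⁆,
    ⁅Γ 3, Γ 4 * Γ 1 * (Γ 4)⁻¹⁆, ⁅Γ 3, (Γ 4)⁻¹ * Γ 1 * Γ 4⁆ }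

/-- The group `G̃` (the quotient `B̃₆` of the braid group `B₆`). -/
abbrev Gtilde : Type := PresentedGroup tildeRels

/-- The generators `Γ₁, …, Γ₅` of `G̃` (index `i : Fin 5` corresponds to `Γᵢ₊₁`). -/
def γ (i : Fin 5) : Gtilde := PresentedGroup.of i

lemma relOne {r : FreeGroup (Fin 5)} (h : r ∈ tildeRels) :
    PresentedGroup.mk tildeRels r = 1 :=
  (QuotientGroup.eq_one_iff r).mpr (Subgroup.subset_normalClosure h)

lemma gamma_eq (i : Fin 5) : γ i = PresentedGroup.mk tildeRels (FreeGroup.of i) := rfl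

/-- In `G̃`, the identity `Γ₄⁻¹Γ₂Γ₅⁻²Γ₄Γ₅²Γ₂⁻¹Γ₄ = Γ₂` holds. -/
theorem stmt9 :
    (γ 3)⁻¹ * γ 1 * (γ 4 ^ 2)⁻¹ * γ 3 * γ 4 ^ 2 * (γ 1)⁻¹ * γ 3 = γ 1 := by
  set a := γ 3 with ha
  set b := γ 1 with hb
  set c := γ 4 with hc
  -- braid relation b a b = a b a
  have R1 : b * a * b = a * b * a := by
    have h := relOne (r := FreeGroup.of 1 * FreeGroup.of 3 * FreeGroup.of 1 *
        (FreeGroup.of 3 * FreeGroup.of 1 * FreeGroup.of 3)⁻¹) (by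
      unfold tildeRels; simp only [Set.mem_insert_iff, Set.mem_singleton_iff]; tauto)
    simp only [map_mul, map_inv] at h
    rw [mul_inv_eq_one] at h
    exact h
  -- braid relation b c b = c b c
  have R2 : b * c * b = c * b * c := by
    have h := relOne (r := FreeGroup.of 1 * FreeGroup.of 4 * FreeGroup.of 1 *
        (FreeGroup.of 4 * FreeGroup.of 1 * FreeGroup.of 4)⁻¹) (by
      unfold tildeRels; simp only [Set.mem_insert_iff, Set.mem_singleton_iff]; tauto)
    simp only [map_mul, map_inv] at h
    rw [mul_inv_eq_one] at h
    exact h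
  -- a commutes with c * b * c⁻¹
  have R4 : a * (c * b * c⁻¹) = (c * b * c⁻¹) * a := by
    have h := relOne (r := ⁅FreeGroup.of (3 : Fin 5), FreeGroup.of 4 * FreeGroup.of 1 *
        (FreeGroup.of 4)⁻¹⁆) (by unfold tildeRels; simp only [Set.mem_insert_iff, Set.mem_singleton_iff]; tauto)
    rw [map_commutatorElement, commutatorElement_eq_one_iff_mul_comm] at h
    simp only [map_mul, map_inv] at h
    exact h
  -- a commutes with c⁻¹ * b * c
  have R5 : a * (c⁻¹ * b * c) = (c⁻¹ * b * c) * a := by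
    have h := relOne (r := ⁅FreeGroup.of (3 : Fin 5), (FreeGroup.of 4)⁻¹ * FreeGroup.of 1 *
        FreeGroup.of 4⁆) (by unfold tildeRels; simp only [Set.mem_insert_iff, Set.mem_singleton_iff]; tauto)
    rw [map_commutatorElement, commutatorElement_eq_one_iff_mul_comm] at h
    simp only [map_mul, map_inv] at h
    exact h
  -- consequences
  have hbc : b * c⁻¹ = c⁻¹ * b⁻¹ * c * b := by
    calc b * c⁻¹ = c⁻¹ * b⁻¹ * (b * c * b) * c⁻¹ * c * b * b⁻¹ * c⁻¹ := by group
    _ = c⁻¹ * b⁻¹ * (c * b * c) * c⁻¹ * c * b * b⁻¹ * c⁻¹ := by rw [R2]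
    _ = c⁻¹ * b⁻¹ * c * b := by group
  have hcb : c * b⁻¹ = b⁻¹ * c⁻¹ * b * c := by
    calc c * b⁻¹ = b⁻¹ * c⁻¹ * (c * b * c) * b⁻¹ := by group
    _ = b⁻¹ * c⁻¹ * (b * c * b) * b⁻¹ := by rw [← R2]
    _ = b⁻¹ * c⁻¹ * b * c := by group
  have heb : b * (c⁻¹ * a * c) = (c⁻¹ * a * c) * b := by
    calc b * (c⁻¹ * a * c) = c⁻¹ * ((c * b * c⁻¹) * a) * c := by group
    _ = c⁻¹ * (a * (c * b * c⁻¹)) * c := by rw [R4]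
    _ = (c⁻¹ * a * c) * b := by group
  have h2 : c⁻¹ * b * c = b * c * b⁻¹ := by
    calc c⁻¹ * b * c = c⁻¹ * (b * c * b) * b⁻¹ := by group
    _ = c⁻¹ * (c * b * c) * b⁻¹ := by rw [R2]
    _ = b * c * b⁻¹ := by group
  rw [h2] at R5
  have hfc : (b⁻¹ * a * b) * c = c * (b⁻¹ * a * b) := by
    calc (b⁻¹ * a * b) * c = b⁻¹ * (a * (b * c * b⁻¹)) * b := by group
    _ = b⁻¹ * ((b * c * b⁻¹) * a) * b := by rw [R5]
    _ = c * (b⁻¹ * a * b) := by group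
  -- main computation
  rw [pow_two c]
  calc a⁻¹ * b * (c * c)⁻¹ * a * (c * c) * b⁻¹ * a
      = a⁻¹ * ((b * c⁻¹) * (c⁻¹ * a * c) * (c * b⁻¹)) * a := by group
    _ = a⁻¹ * ((c⁻¹ * b⁻¹ * c * b) * (c⁻¹ * a * c) * (b⁻¹ * c⁻¹ * b * c)) * a := by
        rw [hbc, hcb]
    _ = a⁻¹ * (c⁻¹ * b⁻¹ * c * (b * (c⁻¹ * a * c)) * (b⁻¹ * c⁻¹ * b * c)) * a := by group
    _ = a⁻¹ * (c⁻¹ * b⁻¹ * c * ((c⁻¹ * a * c) * b) * (b⁻¹ * c⁻¹ * b * c)) * a := by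
        rw [heb]
    _ = a⁻¹ * (c⁻¹ * ((b⁻¹ * a * b) * c)) * a := by group
    _ = a⁻¹ * (c⁻¹ * (c * (b⁻¹ * a * b))) * a := by rw [hfc]
    _ = a⁻¹ * b⁻¹ * (a * b * a) := by group
    _ = a⁻¹ * b⁻¹ * (b * a * b) := by rw [R1]
    _ = b := by group
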